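/- Let f : ℝⁿ → ℝ and h : ℝⁿ → ℝ^m be continuously differentiable, let J(x) denote the m × n Jacobian matrix of h at x, let K > 0 be a real constant, and fix x* ∈ ℝⁿ such that J(x*)J(x*)ᵀ is invertible. Define the FL-CMO closed-loop vector field δ(x) = −∇f(x) − J(x)ᵀ (J(x)J(x)ᵀ)⁻¹ (K h(x) − J(x)∇f(x)). Then δ(x*) = 0 if and only if h(x*) = 0 and there exists λ ∈ ℝ^m with ∇f(x*) + J(x*)ᵀ λ = 0; i.e., the equilibria of the closed-loop dynamics are exactly the points satisfying the first-order optimality (KKT) conditions of the equality-constrained problem min f(x) subject to h(x) = 0. -/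

import Mathlib

/-- The equilibria of the FL-CMO closed-loop dynamics are exactly the KKT points
of the equality-constrained problem min f(x) s.t. h(x) = 0. -/
theorem stmt_4 {n m : ℕ}
    (f : EuclideanSpace ℝ (Fin n) → ℝ)
    (h : EuclideanSpace ℝ (Fin n) → EuclideanSpace ℝ (Fin m))
    (hf : ContDiff ℝ 1 f) (hh : ContDiff ℝ 1 h)
    (K : ℝ) (hK : 0 < K)
    (xs : EuclideanSpace ℝ (Fin n))
    (A : EuclideanSpace ℝ (Fin m) ≃L[ℝ] EuclideanSpace ℝ (Fin m))
    (hA : (A : EuclideanSpace ℝ (Fin m) →L[ℝ] EuclideanSpace ℝ (Fin m)) =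
      (fderiv ℝ h xs).comp (ContinuousLinearMap.adjoint (fderiv ℝ h xs))) :
    (-gradient f xs - (ContinuousLinearMap.adjoint (fderiv ℝ h xs))
        (A.symm (K • h xs - fderiv ℝ h xs (gradient f xs))) = 0) ↔
      (h xs = 0 ∧ ∃ lam : EuclideanSpace ℝ (Fin m),
        gradient f xs + (ContinuousLinearMap.adjoint (fderiv ℝ h xs)) lam = 0) := by
  set J := fderiv ℝ h xs
  set Jt := ContinuousLinearMap.adjoint J
  have hJJt : ∀ v, J (Jt v) = A v := by
    intro v
    have := congrArg (fun (T : EuclideanSpace ℝ (Fin m) →L[ℝ] EuclideanSpace ℝ (Fin m)) => T v) hA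
    simpa using this.symm
  constructor
  · intro heq
    set μ := A.symm (K • h xs - J (gradient f xs)) with hμ
    have hg : gradient f xs = -(Jt μ) := by
      have : -gradient f xs = Jt μ := by
        have := heq
        linear_combination (norm := abel) this
      linear_combination (norm := abel) -this
    have hh0 : K • h xs = 0 := by
      have h1 : J (gradient f xs) = -(A μ) := by
        rw [hg, map_neg, hJJt]
      have h2 : A μ = K • h xs - J (gradient f xs) := A.apply_symm_apply _
      rw [h1, sub_neg_eq_add] at h2
      exact right_eq_add.mp h2
    have hhx : h xs = 0 := by
      have := hh0
      rwa [smul_eq_zero_iff_right (ne_of_gt hK)] at this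
    refine ⟨hhx, μ, ?_⟩
    rw [hg]; abel
  · rintro ⟨hhx, lam, hlam⟩
    have hg : gradient f xs = -(Jt lam) := by
      linear_combination (norm := abel) hlam
    rw [hg, hhx, smul_zero, map_neg, hJJt, zero_sub, neg_neg, neg_neg,
      A.symm_apply_apply]
    abel
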